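/- Let K be a subgraph of a finite simple undirected graph H such that for every pair of vertices s, t of H, if s and t are c-vertex-connected in H then they are min(k+1, c)-vertex-connected in K (K is a (k+1)-VC certificate of H). Let T be a depth-first search tree of K. If u and v are vertices whose least common ancestor w in T has depth at most k−1 (i.e., w lies within the top k layers of T), w ≠ u, and w ≠ v, then u and v are not adjacent in H. -/

import Mathlib

/-- `u` is an ancestor of `v` in the tree `T` rooted at `r`: `u` lies on every
(equivalently, the unique) path in `T` from `r` to `v`. -/
def IsAncestor {V : Type*} (T : SimpleGraph V) (r u v : V) : Prop :=
  ∀ p : T.Walk r v, p.IsPath → u ∈ p.support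

/-- `T` is a DFS tree of `K` rooted at `r`: a spanning tree such that every edge of `K`
connects a vertex to one of its ancestors or descendants in `T`. -/
def IsDFSTree {V : Type*} (K T : SimpleGraph V) (r : V) : Prop :=
  T ≤ K ∧ T.IsTree ∧ ∀ x y : V, K.Adj x y → IsAncestor T r x y ∨ IsAncestor T r y x

/-- `s` and `t` are `c`-vertex-connected in `H`: there are `c` pairwise internally
vertex-disjoint `s`-`t` paths. -/
def PairConnected {V : Type*} (H : SimpleGraph V) (s t : V) (c : ℕ) : Prop :=
  ∃ f : Fin c → H.Path s t, ∀ i j : Fin c, i ≠ j →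
    ∀ w : V, w ∈ (f i).1.support → w ∈ (f j).1.support → w = s ∨ w = t

section Aux

open SimpleGraph Walk

variable {V : Type*} [DecidableEq V] {T : SimpleGraph V} {r : V}

lemma anc_refl (u : V) : IsAncestor T r u u := fun p _ => p.end_mem_support

lemma anc_trans {a b c : V} (h1 : IsAncestor T r a b) (h2 : IsAncestor T r b c) :
    IsAncestor T r a c := fun p hp => by
  have hb := h2 p hp
  exact p.support_takeUntil_subset hb (h1 (p.takeUntil b hb) (hp.takeUntil hb))

lemma anc_of_mem {a b : V} (hTree : T.IsTree) (p : T.Walk r b) (hp : p.IsPath)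
    (ha : a ∈ p.support) : IsAncestor T r a b := fun q hq => by
  have : q = p := (hTree.existsUnique_path r b).unique hq hp
  rwa [this]

lemma anc_comp {a b x : V} (hTree : T.IsTree) (ha : IsAncestor T r a x)
    (hb : IsAncestor T r b x) : IsAncestor T r a b ∨ IsAncestor T r b a := by
  obtain ⟨p, hp, -⟩ := hTree.existsUnique_path r x
  have hax := ha p hp
  have hbx := hb p hp
  rw [← Walk.take_spec p hax, Walk.mem_support_append_iff] at hbx
  rcases hbx with h | h
  · exact Or.inr (anc_of_mem hTree _ (hp.takeUntil hax) h)
  · left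
    refine anc_of_mem hTree ((p.takeUntil a hax).append ((p.dropUntil a hax).takeUntil b h)) ?_ ?_
    · have heq : (((p.takeUntil a hax).append ((p.dropUntil a hax).takeUntil b h)).append
          ((p.dropUntil a hax).dropUntil b h)) = p := by
        rw [← Walk.append_assoc, Walk.take_spec, Walk.take_spec]
      exact Walk.IsPath.of_append_left (heq ▸ hp)
    · rw [Walk.mem_support_append_iff]
      exact Or.inl (Walk.end_mem_support _)

lemma anc_antisymm {a b : V} (hTree : T.IsTree) (hab : IsAncestor T r a b)
    (hba : IsAncestor T r b a) : a = b := by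
  by_contra hne
  obtain ⟨p, hp, -⟩ := hTree.existsUnique_path r b
  have hax := hab p hp
  have hb := hba (p.takeUntil a hax) (hp.takeUntil hax)
  have hnodup : ((p.takeUntil a hax).support ++ (p.dropUntil a hax).support.tail).Nodup := by
    rw [← Walk.support_append, Walk.take_spec]; exact hp.support_nodup
  have hb2 : b ∈ (p.dropUntil a hax).support.tail :=
    Walk.end_mem_tail_support_of_ne hne (p.dropUntil a hax)
  rw [List.nodup_append] at hnodup
  exact hnodup.2.2 b hb b hb2 rfl

lemma exists_common_anc {K : SimpleGraph V} (hTree : T.IsTree)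
    (hDFS : ∀ x y : V, K.Adj x y → IsAncestor T r x y ∨ IsAncestor T r y x)
    {u v : V} (p : K.Walk u v) :
    ∃ z ∈ p.support, IsAncestor T r z u ∧ IsAncestor T r z v := by
  induction p with
  | nil => exact ⟨_, Walk.start_mem_support _, anc_refl _, anc_refl _⟩
  | @cons u x v h q ih =>
    obtain ⟨z, hz, hzx, hzv⟩ := ih
    rcases hDFS _ _ h with hux | hxu
    · rcases anc_comp hTree hzx hux with hzu | huz
      · exact ⟨z, by rw [Walk.support_cons]; exact List.mem_cons_of_mem _ hz, hzu, hzv⟩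
      · exact ⟨u, by rw [Walk.support_cons]; exact List.mem_cons_self, anc_refl _,
          anc_trans huz hzv⟩
    · exact ⟨z, by rw [Walk.support_cons]; exact List.mem_cons_of_mem _ hz,
        anc_trans hzx hxu, hzv⟩

end Aux

/-- Let `K` be a `(k+1)`-VC certificate of `H` and `T` a DFS tree of `K`.
If the least common ancestor `w` of `u` and `v` lies within the top `k` layers of `T`
(depth less than `k`) and `w ≠ u`, `w ≠ v`, then `u` and `v` are not adjacent in `H`. -/
theorem vc_certificate_dfs_no_cross_edge {V : Type*} [Fintype V]
    (H K : SimpleGraph V) (k : ℕ) (hKH : K ≤ H)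
    (hcert : ∀ s t : V, ∀ c : ℕ, PairConnected H s t c → PairConnected K s t (min (k + 1) c))
    (T : SimpleGraph V) (r : V) (hT : IsDFSTree K T r)
    (u v w : V)
    (hwu : IsAncestor T r w u) (hwv : IsAncestor T r w v)
    (hlca : ∀ z : V, IsAncestor T r z u → IsAncestor T r z v → IsAncestor T r z w)
    (hdepth : T.dist r w < k) (hne1 : w ≠ u) (hne2 : w ≠ v) :
    ¬ H.Adj u v := by
  classical
  intro hadj
  obtain ⟨hTK, hTree, hDFS⟩ := hT
  have hPC : PairConnected H u v (k + 1) := by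
    refine ⟨fun _ => ⟨SimpleGraph.Walk.cons hadj SimpleGraph.Walk.nil, by simp [hadj.ne]⟩, ?_⟩
    intro i j _ z hzi _
    simp only [SimpleGraph.Walk.support_cons, SimpleGraph.Walk.support_nil,
      List.mem_cons, List.mem_singleton] at hzi
    tauto
  have hK' := hcert u v (k + 1) hPC
  rw [min_self] at hK'
  obtain ⟨g, hg⟩ := hK'
  -- the path from r to w has few vertices
  obtain ⟨q0, hq0len⟩ := (hTree.isConnected r w).exists_walk_length_eq_dist
  set P := q0.bypass with hPdef
  have hPpath : P.IsPath := q0.bypass_isPath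
  have hPlen : P.length ≤ T.dist r w := hq0len ▸ q0.length_bypass_le
  -- each of the k+1 paths contains an ancestor of w
  have key : ∀ i : Fin (k + 1), ∃ z, z ∈ (g i).1.support ∧ z ∈ P.support := by
    intro i
    obtain ⟨z, hz, hzu, hzv⟩ := exists_common_anc hTree hDFS (g i).1
    exact ⟨z, hz, hlca z hzu hzv P hPpath⟩
  choose z hz1 hz2 using key
  -- pigeonhole
  have hcard : P.support.toFinset.card < (Finset.univ : Finset (Fin (k + 1))).card := by
    calc P.support.toFinset.card ≤ P.support.length := P.support.toFinset_card_le
      _ = P.length + 1 := P.length_support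
      _ ≤ T.dist r w + 1 := by omega
      _ < k + 1 := by omega
      _ = (Finset.univ : Finset (Fin (k + 1))).card := by simp
  obtain ⟨i, -, j, -, hij, hzeq⟩ :=
    Finset.exists_ne_map_eq_of_card_lt_of_maps_to hcard
      (fun i _ => List.mem_toFinset.mpr (hz2 i))
  have := hg i j hij (z i) (hz1 i) (hzeq ▸ hz1 j)
  -- z i is an ancestor of w on P, so z i ≠ u and z i ≠ v
  have hanc : IsAncestor T r (z i) w := anc_of_mem hTree P hPpath (hz2 i)
  rcases this with h | h
  · exact hne1 (anc_antisymm hTree hwu (h ▸ hanc))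
  · exact hne2 (anc_antisymm hTree hwv (h ▸ hanc))
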